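/- Let d ≥ 2 be an even integer and Θ = (X₁,X₂) a d-small symbol with defining intervals such that w_ud(Θ) = ×^α ∧^w ∨^h ∘^β for some α, w, h, β ≥ 0 (all ×'s first, then all ∧'s, then all ∨'s, then all ∘'s). Let Ψ = (Y₁,Y₂) be a d-small symbol with the same defining intervals as Θ (the same I₁ and I₂, attached to the same rows) such that w_ud(Ψ) ≠ w_ud(Θ) and w_ud(Ψ) is obtained from w_ud(Θ) by permuting the letters ∧ and ∨ among the positions carrying ∧ or ∨, leaving every × and ∘ in place. Then max(Y₁ ∪ Y₂) > max(X₁ ∪ X₂). -/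
import Mathlib


open scoped Classical

/-- A β-set: a set of integers containing all sufficiently small integers
and no sufficiently large ones. -/
def IsBetaSet (X : Set ℤ) : Prop :=
  (∃ c : ℤ, ∀ z : ℤ, z < c → z ∈ X) ∧ (∃ C : ℤ, ∀ z : ℤ, C ≤ z → z ∉ X)

/-- `topB X = max X`. -/
noncomputable def topB (X : Set ℤ) : ℤ := sSup X

/-- `botB X = max {z | every integer < z lies in X}`. -/
noncomputable def botB (X : Set ℤ) : ℤ := sSup {z : ℤ | ∀ w : ℤ, w < z → w ∈ X}

/-- The charge `s(X)` of a β-set `X`, computed with the cutoff `c = botB X`. -/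
noncomputable def chargeB (X : Set ℤ) : ℤ :=
  ((X ∩ Set.Ici (botB X)).ncard : ℤ) + botB X - 1

/-- `elemSeq X j` is the `(j+1)`-st largest element of the β-set `X`. -/
noncomputable def elemSeq (X : Set ℤ) : ℕ → ℤ
  | 0 => sSup X
  | n + 1 => sSup (X ∩ Set.Iio (elemSeq X n))

/-- The partition `λ(X)` of a β-set `X`, `0`-indexed: `partB X j = λ_{j+1}`,
recovered from `x_j = s(X) + λ_j - j + 1` where `x_j` is the `j`-th largest element. -/
noncomputable def partB (X : Set ℤ) (j : ℕ) : ℕ :=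
  (elemSeq X j - chargeB X + j).toNat

/-- The size `|λ(X)|` of the partition of a β-set `X`. -/
noncomputable def sizeB (X : Set ℤ) : ℕ := ∑ᶠ j : ℕ, partB X j

/-- A partition, encoded as a weakly decreasing eventually zero function (0-indexed). -/
def IsPartition (μ : ℕ → ℕ) : Prop :=
  (∀ j, μ (j + 1) ≤ μ j) ∧ ∃ N, ∀ j, N ≤ j → μ j = 0

/-- The β-set `{s + λ_j - j + 1 : j ≥ 1}` of the partition `μ` with charge `s`. -/
def betaOf (μ : ℕ → ℕ) (s : ℤ) : Set ℤ :=
  {x : ℤ | ∃ j : ℕ, x = s + (μ j : ℤ) - (j : ℤ)}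

/-- The symbol `Θ = (X₁, X₂)` is `d`-small with defining intervals
`I₁ = [a₁,b₁]` and `I₂ = [a₂,b₂]`. -/
structure IsDSmallWith (d : ℤ) (X₁ X₂ : Set ℤ) (a₁ b₁ a₂ b₂ : ℤ) : Prop where
  len₁ : b₁ - a₁ = d / 2 - 1
  len₂ : b₂ - a₂ = d / 2 - 1
  bot₁ : a₁ ≤ botB X₁
  bot₂ : a₂ ≤ botB X₂
  top₁ : topB X₁ ≤ b₁
  top₂ : topB X₂ ≤ b₂
  cong : d ∣ b₂ - (b₁ + d / 2)

/-- The symbol `Θ = (X₁, X₂)` is `d`-small: it admits some pair of defining intervals. -/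
def IsDSmall (d : ℤ) (X₁ X₂ : Set ℤ) : Prop :=
  ∃ a₁ b₁ a₂ b₂ : ℤ, IsDSmallWith d X₁ X₂ a₁ b₁ a₂ b₂

/-- The row (`1` or `2`) containing the right region. -/
def rightRow (b₁ b₂ : ℤ) : ℕ := if b₁ < b₂ then 2 else 1

/-- The row, as a β-set, containing the right region. -/
def rightSet (X₁ X₂ : Set ℤ) (b₁ b₂ : ℤ) : Set ℤ := if b₁ < b₂ then X₂ else X₁

/-- The row, as a β-set, containing the left region. -/
def leftSet (X₁ X₂ : Set ℤ) (b₁ b₂ : ℤ) : Set ℤ := if b₁ < b₂ then X₁ else X₂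

/-- The cardinality `kd` of the middle region. -/
def middleLen (d b₁ b₂ : ℤ) : ℤ := |b₂ - b₁| - d / 2

/-- The alphabet `{∧, ∨, ×, ∘}` of up-down diagrams: `up = ∧`, `dn = ∨`,
`cross = ×`, `circ = ∘`. -/
inductive UD : Type
  | up
  | dn
  | cross
  | circ
deriving DecidableEq

/-- The up-down diagram `w_ud(Θ)` of a `d`-small symbol with defining intervals:
`wud d X₁ X₂ b₁ b₂ i` is the letter `w_i` for `1 ≤ i ≤ d/2`.  Here the right
region is `[m+1, m+d/2]` with `m = max b₁ b₂ - d/2`, `β_i = m + i`, and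
`β_i - kd - d/2 = β_i - |b₂ - b₁|`. -/
noncomputable def wud (d : ℤ) (X₁ X₂ : Set ℤ) (b₁ b₂ : ℤ) (i : ℤ) : UD :=
  if (max b₁ b₂ - d / 2 + i) ∈ rightSet X₁ X₂ b₁ b₂ then
    if (max b₁ b₂ - d / 2 + i) - |b₂ - b₁| ∈ leftSet X₁ X₂ b₁ b₂ then UD.cross else UD.up
  else
    if (max b₁ b₂ - d / 2 + i) - |b₂ - b₁| ∈ leftSet X₁ X₂ b₁ b₂ then UD.dn else UD.circ

/-- Removing an `e`-cohook in row `1` (the rows get interchanged afterwards). -/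
def RemoveCohookRow1 (e : ℤ) (Θ Θ' : Set ℤ × Set ℤ) : Prop :=
  ∃ x : ℤ, x ∈ Θ.1 ∧ x - e ∉ Θ.2 ∧ Θ' = (Θ.2 ∪ {x - e}, Θ.1 \ {x})

/-- Removing an `e`-cohook in row `2` (the rows get interchanged afterwards). -/
def RemoveCohookRow2 (e : ℤ) (Θ Θ' : Set ℤ × Set ℤ) : Prop :=
  ∃ x : ℤ, x ∈ Θ.2 ∧ x - e ∉ Θ.1 ∧ Θ' = (Θ.2 \ {x}, Θ.1 ∪ {x - e})

/-- Removing an `e`-cohook. -/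
def RemoveCohook (e : ℤ) (Θ Θ' : Set ℤ × Set ℤ) : Prop :=
  RemoveCohookRow1 e Θ Θ' ∨ RemoveCohookRow2 e Θ Θ'

/-- The symbol `Θ` has an `e`-cohook. -/
def HasCohook (e : ℤ) (Θ : Set ℤ × Set ℤ) : Prop :=
  (∃ x : ℤ, x ∈ Θ.1 ∧ x - e ∉ Θ.2) ∨ (∃ x : ℤ, x ∈ Θ.2 ∧ x - e ∉ Θ.1)

/-- `C` is an `e`-cocore of `Θ`: a symbol with no `e`-cohooks obtained from `Θ`
by a finite sequence of `e`-cohook removals. -/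
def IsCocoreOf (e : ℤ) (Θ C : Set ℤ × Set ℤ) : Prop :=
  Relation.ReflTransGen (RemoveCohook e) Θ C ∧ ¬ HasCohook e C

/-- The `n`-fold composition of a relation. -/
def RelPow {α : Type*} (R : α → α → Prop) : ℕ → α → α → Prop
  | 0 => Eq
  | n + 1 => fun a c => ∃ b, R a b ∧ RelPow R n b c

/-- `(a, b)` (row `a`, column `b`, both `1`-indexed) is a box of the partition `μ`
(`μ` is `0`-indexed, so `μ (a-1)` is the `a`-th part `λ_a`). -/
def IsBox (μ : ℕ → ℕ) (a b : ℕ) : Prop := 1 ≤ a ∧ 1 ≤ b ∧ b ≤ μ (a - 1)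

/-- `(a, b)` is an addable box of `μ`: adjoining it yields a partition. -/
def IsAddableBox (μ : ℕ → ℕ) (a b : ℕ) : Prop :=
  1 ≤ a ∧ b = μ (a - 1) + 1 ∧ (a = 1 ∨ b ≤ μ (a - 2))

/-- `(a, b)` is a removable box of `μ`: deleting it yields a partition. -/
def IsRemovableBox (μ : ℕ → ℕ) (a b : ℕ) : Prop :=
  1 ≤ a ∧ b = μ (a - 1) ∧ 1 ≤ b ∧ μ a < b

/-- The charged content `t + b - a` of the box in row `a` and column `b`,
with respect to the charge `t`. -/
def chCont (t : ℤ) (a b : ℕ) : ℤ := t + (b : ℤ) - (a : ℤ)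

/-- Selecting the component `j ∈ {1, 2}` of a bipartition. -/
def compPart (μ₁ μ₂ : ℕ → ℕ) (j : ℕ) : ℕ → ℕ := if j = 1 then μ₁ else μ₂

/-- Selecting the component `j ∈ {1, 2}` of a pair of charges. -/
def compT (t₁ t₂ : ℤ) (j : ℕ) : ℤ := if j = 1 then t₁ else t₂

/-- The box `(a, b)` in component `j` is a good removable `i`-box of the
bipartition `(μ₁, μ₂)` with charges `(t₁, t₂)`, where `r` is the row containing
the right region: it is a removable box of charged content `≡ i (mod d)` and
there is no addable box `A` of either component with charged content `≡ i (mod d)`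
such that either `A` has strictly larger charged content, or `A` has equal
charged content and lies in component `r`. -/
def IsGoodRemovableBox (d : ℤ) (μ₁ μ₂ : ℕ → ℕ) (t₁ t₂ : ℤ) (r : ℕ) (i : ℤ)
    (j a b : ℕ) : Prop :=
  (j = 1 ∨ j = 2) ∧ IsRemovableBox (compPart μ₁ μ₂ j) a b ∧
    d ∣ chCont (compT t₁ t₂ j) a b - i ∧
    ∀ j' a' b' : ℕ, (j' = 1 ∨ j' = 2) → IsAddableBox (compPart μ₁ μ₂ j') a' b' →
      d ∣ chCont (compT t₁ t₂ j') a' b' - i →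
      ¬ (chCont (compT t₁ t₂ j) a b < chCont (compT t₁ t₂ j') a' b' ∨
        (chCont (compT t₁ t₂ j') a' b' = chCont (compT t₁ t₂ j) a b ∧ j' = r))

/-- The position of a letter in the order `× < ∧ < ∨ < ∘`. -/
def udIdx : UD → ℕ
  | UD.cross => 0
  | UD.up => 1
  | UD.dn => 2
  | UD.circ => 3

/-- The word `w₁ ⋯ w_{d/2}` reads `×^α ∧^w ∨^h ∘^β`: all `×`'s first, then all
`∧`'s, then all `∨`'s, then all `∘`'s. -/
def SortedUD (d : ℤ) (w : ℤ → UD) : Prop :=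
  ∀ i j : ℤ, 1 ≤ i → i ≤ j → j ≤ d / 2 → udIdx (w i) ≤ udIdx (w j)

/-- The number of occurrences of the letter `u` in the word `w₁ ⋯ w_{d/2}`. -/
noncomputable def countUD (d : ℤ) (w : ℤ → UD) (u : UD) : ℕ :=
  ((Finset.Icc (1 : ℤ) (d / 2)).filter fun i => w i = u).card

/-- `w'` is obtained from `w` by permuting the letters `∧` and `∨` among the
positions carrying `∧` or `∨`, leaving every `×` and `∘` in place. -/
def PermUpDn (d : ℤ) (w w' : ℤ → UD) : Prop :=
  (∀ i : ℤ, 1 ≤ i → i ≤ d / 2 →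
    ((w' i = UD.cross ↔ w i = UD.cross) ∧ (w' i = UD.circ ↔ w i = UD.circ))) ∧
  countUD d w' UD.up = countUD d w UD.up

/-- Replace every letter `∧` by `∨`, leaving the other letters unchanged. -/
def replaceUp : UD → UD
  | UD.up => UD.dn
  | u => u

lemma betaBddAbove {X : Set ℤ} (h : IsBetaSet X) : BddAbove X := by
  obtain ⟨C, hC⟩ := h.2
  exact ⟨C, fun z hz => le_of_not_gt fun hlt => hC z hlt.le hz⟩

lemma betaNonempty {X : Set ℤ} (h : IsBetaSet X) : X.Nonempty := by
  obtain ⟨c, hc⟩ := h.1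
  exact ⟨c - 1, hc _ (by omega)⟩

lemma keyLemma (e M Δ : ℤ) (he : 1 ≤ e) (hΔ : e ≤ Δ)
    (R L R' L' : Set ℤ)
    (hRb : BddAbove R) (hLb : BddAbove L) (hR'b : BddAbove (R' ∪ L'))
    (hRne : R.Nonempty)
    (htopR : sSup R ≤ M) (htopL : sSup L ≤ M - Δ)
    (j0 : ℤ) (hj1 : 1 ≤ j0) (hj2 : j0 ≤ e)
    (hmem : M - e + j0 ∈ R')
    (hnot : ∀ i : ℤ, j0 ≤ i → i ≤ e → M - e + i ∉ R) :
    sSup (R ∪ L) < sSup (R' ∪ L') := by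
  have hub : ∀ z ∈ R ∪ L, z ≤ M - e + j0 - 1 := by
    rintro z (hz | hz)
    · have h1 : z ≤ M := le_trans (le_csSup hRb hz) htopR
      by_contra hcon
      refine hnot (z - (M - e)) (by omega) (by omega) ?_
      have hz' : M - e + (z - (M - e)) = z := by ring
      rwa [hz']
    · have h2 := le_trans (le_csSup hLb hz) htopL
      omega
  have hne : (R ∪ L).Nonempty := hRne.mono Set.subset_union_left
  have h1 : sSup (R ∪ L) ≤ M - e + j0 - 1 := csSup_le hne hub
  have h2 : M - e + j0 ≤ sSup (R' ∪ L') := le_csSup hR'b (Or.inl hmem)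
  omega

/-- Let `Θ = (X₁,X₂)` be a `d`-small symbol with defining intervals
whose up-down diagram reads `×^α ∧^w ∨^h ∘^β`, and let `Ψ = (Y₁,Y₂)` be a `d`-small
symbol with the same defining intervals whose up-down diagram differs from that of
`Θ` but is obtained from it by permuting the `∧`'s and `∨`'s, leaving every `×` and
`∘` in place. Then `max (Y₁ ∪ Y₂) > max (X₁ ∪ X₂)`. -/
theorem stmt14 (d : ℤ) (hd : 2 ≤ d) (hdE : Even d)
    (X₁ X₂ Y₁ Y₂ : Set ℤ)
    (hX₁ : IsBetaSet X₁) (hX₂ : IsBetaSet X₂) (hY₁ : IsBetaSet Y₁) (hY₂ : IsBetaSet Y₂)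
    (a₁ b₁ a₂ b₂ : ℤ)
    (hsmX : IsDSmallWith d X₁ X₂ a₁ b₁ a₂ b₂)
    (hsmY : IsDSmallWith d Y₁ Y₂ a₁ b₁ a₂ b₂)
    (hsort : SortedUD d (wud d X₁ X₂ b₁ b₂))
    (hperm : PermUpDn d (wud d X₁ X₂ b₁ b₂) (wud d Y₁ Y₂ b₁ b₂))
    (hne : ∃ i : ℤ, 1 ≤ i ∧ i ≤ d / 2 ∧ wud d Y₁ Y₂ b₁ b₂ i ≠ wud d X₁ X₂ b₁ b₂ i) :
    topB (X₁ ∪ X₂) < topB (Y₁ ∪ Y₂) := by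
  obtain ⟨r, hr⟩ := hdE
  have he1 : 1 ≤ d / 2 := by omega
  -- |b₂ - b₁| ≥ d / 2
  obtain ⟨k, hk⟩ := hsmX.cong
  have hDelta : d / 2 ≤ |b₂ - b₁| := by
    rcases le_or_gt 0 k with hk0 | hk0
    · have h0 : 0 ≤ d * k := mul_nonneg (by omega) hk0
      exact le_abs.2 (Or.inl (by omega))
    · have h0 : d * k ≤ d * (-1) := mul_le_mul_of_nonneg_left (by omega) (by omega)
      have h0' : d * (-1) = -d := by ring
      exact le_abs.2 (Or.inr (by omega))
  -- extract the position j0 where Y has ∧ but X has ∨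
  obtain ⟨j0, hj1, hj2, hYup, hXdn⟩ :
      ∃ j0 : ℤ, 1 ≤ j0 ∧ j0 ≤ d / 2 ∧ wud d Y₁ Y₂ b₁ b₂ j0 = UD.up ∧
        wud d X₁ X₂ b₁ b₂ j0 = UD.dn := by
    by_contra hcon
    push_neg at hcon
    have hsub : (Finset.Icc (1:ℤ) (d/2)).filter (fun i => wud d Y₁ Y₂ b₁ b₂ i = UD.up) ⊆
        (Finset.Icc (1:ℤ) (d/2)).filter (fun i => wud d X₁ X₂ b₁ b₂ i = UD.up) := by
      intro i hi
      simp only [Finset.mem_filter, Finset.mem_Icc] at hi ⊢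
      obtain ⟨⟨h1, h2⟩, h3⟩ := hi
      refine ⟨⟨h1, h2⟩, ?_⟩
      have hiff := hperm.1 i h1 h2
      cases hX : wud d X₁ X₂ b₁ b₂ i with
      | up => rfl
      | dn => exact absurd hX (hcon i h1 h2 h3)
      | cross => rw [hiff.1.2 hX] at h3; exact absurd h3 (by simp)
      | circ => rw [hiff.2.2 hX] at h3; exact absurd h3 (by simp)
    have hcard : ((Finset.Icc (1:ℤ) (d/2)).filter
          (fun i => wud d X₁ X₂ b₁ b₂ i = UD.up)).card ≤
        ((Finset.Icc (1:ℤ) (d/2)).filter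
          (fun i => wud d Y₁ Y₂ b₁ b₂ i = UD.up)).card := by
      have := hperm.2
      unfold countUD at this
      omega
    have heqf := Finset.eq_of_subset_of_card_le hsub hcard
    obtain ⟨i0, h1, h2, hneq⟩ := hne
    have hupiff : wud d Y₁ Y₂ b₁ b₂ i0 = UD.up ↔ wud d X₁ X₂ b₁ b₂ i0 = UD.up := by
      have := Finset.ext_iff.mp heqf i0
      simpa [Finset.mem_filter, Finset.mem_Icc, h1, h2] using this
    have hiff := hperm.1 i0 h1 h2
    cases hX : wud d X₁ X₂ b₁ b₂ i0 with
    | up => exact hneq ((hupiff.2 hX).trans hX.symm)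
    | cross => exact hneq ((hiff.1.2 hX).trans hX.symm)
    | circ => exact hneq ((hiff.2.2 hX).trans hX.symm)
    | dn =>
      cases hY : wud d Y₁ Y₂ b₁ b₂ i0 with
      | dn => exact hneq (hY.trans hX.symm)
      | up => rw [hupiff.1 hY] at hX; exact absurd hX (by simp)
      | cross => rw [hiff.1.1 hY] at hX; exact absurd hX (by simp)
      | circ => rw [hiff.2.1 hY] at hX; exact absurd hX (by simp)
  -- membership facts from the letters
  have hYmem : (max b₁ b₂ - d / 2 + j0) ∈ rightSet Y₁ Y₂ b₁ b₂ := by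
    by_contra h
    unfold wud at hYup
    rw [if_neg h] at hYup
    split_ifs at hYup <;> simp_all
  have hXnot : ∀ i : ℤ, j0 ≤ i → i ≤ d / 2 →
      (max b₁ b₂ - d / 2 + i) ∉ rightSet X₁ X₂ b₁ b₂ := by
    intro i hji hie hmem
    have hidx := hsort j0 i hj1 hji hie
    rw [hXdn] at hidx
    unfold wud at hidx
    rw [if_pos hmem] at hidx
    split_ifs at hidx <;> simp [udIdx] at hidx
  -- case split on which row is on the right
  rcases lt_trichotomy b₁ b₂ with hlt | heq | hgt
  · have hmax : max b₁ b₂ = b₂ := max_eq_right hlt.le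
    have habs : |b₂ - b₁| = b₂ - b₁ := abs_of_pos (by omega)
    rw [hmax] at hYmem hXnot
    unfold rightSet at hYmem hXnot
    rw [if_pos hlt] at hYmem hXnot
    unfold topB
    rw [Set.union_comm X₁ X₂, Set.union_comm Y₁ Y₂]
    refine keyLemma (d / 2) b₂ (b₂ - b₁) he1 (by omega) X₂ X₁ Y₂ Y₁
      (betaBddAbove hX₂) (betaBddAbove hX₁)
      ((betaBddAbove hY₂).union (betaBddAbove hY₁)) (betaNonempty hX₂)
      hsmX.top₂ ?_ j0 hj1 hj2 hYmem hXnot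
    have h := hsmX.top₁
    unfold topB at h
    linarith
  · rw [heq] at hDelta
    simp at hDelta
    omega
  · have hmax : max b₁ b₂ = b₁ := max_eq_left hgt.le
    have habs : |b₂ - b₁| = b₁ - b₂ := by rw [abs_of_neg (show b₂ - b₁ < 0 by omega)]; ring
    rw [hmax] at hYmem hXnot
    unfold rightSet at hYmem hXnot
    rw [if_neg (by omega)] at hYmem hXnot
    unfold topB
    refine keyLemma (d / 2) b₁ (b₁ - b₂) he1 (by omega) X₁ X₂ Y₁ Y₂
      (betaBddAbove hX₁) (betaBddAbove hX₂)
      ((betaBddAbove hY₁).union (betaBddAbove hY₂)) (betaNonempty hX₁)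
      hsmX.top₁ ?_ j0 hj1 hj2 hYmem hXnot
    have h := hsmX.top₂
    unfold topB at h
    linarith
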